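/- ℤ² cannot be tiled by finitely many (at least two) Cartesian cosets v + (aℤ × bℤ) no two of which are cosets of the same subgroup; equivalently, any tiling of ℤ² by at least two Cartesian cosets contains two tiles that are translates of one another. -/

import Mathlib

open Finset Complex

lemma exp_pow_eq_one_iff (d : ℕ) (hd : 0 < d) (m : ℕ) :
    Complex.exp (2 * Real.pi * Complex.I / d) ^ m = 1 ↔ d ∣ m := by
  rw [← Complex.exp_nat_mul, Complex.exp_eq_one_iff]
  have hπ : (2 * (Real.pi:ℂ) * Complex.I) ≠ 0 := by
    simp [Real.pi_ne_zero, Complex.I_ne_zero, Complex.ofReal_ne_zero]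
  have hd' : (d:ℂ) ≠ 0 := Nat.cast_ne_zero.mpr hd.ne'
  constructor
  · rintro ⟨k, hk⟩
    have h2 : (m : ℂ) = k * d := by
      field_simp at hk
      have h3 : ((m:ℂ)) * (2 * (Real.pi:ℂ) * Complex.I) = (↑k * ↑d) * (2 * (Real.pi:ℂ) * Complex.I) := by
        rw [hk]; ring
      exact mul_right_cancel₀ hπ h3
    have h4 : (m : ℤ) = k * d := by exact_mod_cast h2
    have h5 : (d:ℤ) ∣ (m:ℤ) := ⟨k, by rw [h4]; ring⟩
    exact_mod_cast h5
  · rintro ⟨k, rfl⟩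
    refine ⟨k, ?_⟩
    push_cast
    field_simp

lemma coset_sum (ζ : ℂ) (hζ : ζ ≠ 0) (d A : ℕ) (hd : 0 < d) (hdA : d ∣ A) (w : ℤ) :
    ∑ p ∈ (Finset.Ico (0:ℤ) A).filter (fun p => (d:ℤ) ∣ p - w), ζ ^ p
      = ζ ^ (w % (d:ℤ)) * ∑ k ∈ Finset.range (A / d), (ζ ^ (d:ℕ)) ^ k := by
  classical
  obtain ⟨e, hAe⟩ := hdA
  have hAde : A / d = e := by rw [hAe, Nat.mul_div_cancel_left _ hd]
  have hd' : (0:ℤ) < d := by exact_mod_cast hd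
  have hr0 : 0 ≤ w % (d:ℤ) := Int.emod_nonneg w hd'.ne'
  have hrd : w % (d:ℤ) < d := Int.emod_lt_of_pos w hd'
  have hwr : (d:ℤ) ∣ w - w % d := Int.dvd_self_sub_emod
  rw [Finset.mul_sum, hAde]
  refine Finset.sum_nbij' (fun p => ((p - w % d) / d).toNat) (fun k => w % d + d * k)
    ?_ ?_ ?_ ?_ ?_
  · intro p hp
    simp only [Finset.mem_filter, Finset.mem_Ico] at hp
    obtain ⟨⟨hp0, hpA⟩, hdvd⟩ := hp
    have hdvd2 : (d:ℤ) ∣ p - w % d := by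
      have : p - w % d = (p - w) + (w - w % d) := by ring
      rw [this]; exact dvd_add hdvd hwr
    obtain ⟨c, hc⟩ := hdvd2
    have hc0 : 0 ≤ c := by
      rcases le_or_gt 0 c with h | h
      · exact h
      · exfalso; nlinarith
    have hce : c < e := by
      by_contra hce
      push_neg at hce
      have : (A:ℤ) = d * e := by exact_mod_cast congrArg (Nat.cast : ℕ → ℤ) hAe
      nlinarith
    have hq : (p - w % d) / (d:ℤ) = c := by rw [hc, Int.mul_ediv_cancel_left _ hd'.ne']
    simp only [Finset.mem_range, hq]
    omega
  · intro k hk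
    simp only [Finset.mem_range] at hk
    simp only [Finset.mem_filter, Finset.mem_Ico]
    have hA : (A:ℤ) = d * e := by exact_mod_cast congrArg (Nat.cast : ℕ → ℤ) hAe
    have hkZ : (k:ℤ) < e := by exact_mod_cast hk
    refine ⟨⟨by positivity, by nlinarith⟩, ?_⟩
    have : w % d + d * k - w = d * k - (w - w % d) := by ring
    rw [this]
    exact dvd_sub (Dvd.intro _ rfl) hwr
  · intro p hp
    simp only [Finset.mem_filter, Finset.mem_Ico] at hp
    obtain ⟨⟨hp0, hpA⟩, hdvd⟩ := hp
    have hdvd2 : (d:ℤ) ∣ p - w % d := by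
      have : p - w % d = (p - w) + (w - w % d) := by ring
      rw [this]; exact dvd_add hdvd hwr
    obtain ⟨c, hc⟩ := hdvd2
    have hc0 : 0 ≤ c := by
      rcases le_or_gt 0 c with h | h
      · exact h
      · exfalso; nlinarith
    have hq : (p - w % d) / (d:ℤ) = c := by rw [hc, Int.mul_ediv_cancel_left _ hd'.ne']
    beta_reduce
    rw [hq, Int.toNat_of_nonneg hc0]
    omega
  · intro k hk
    have : (w % d + d * k - w % d) / (d:ℤ) = k := by
      rw [add_sub_cancel_left, Int.mul_ediv_cancel_left _ hd'.ne']
    beta_reduce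
    rw [this, Int.toNat_natCast]
  · intro p hp
    simp only [Finset.mem_filter, Finset.mem_Ico] at hp
    obtain ⟨⟨hp0, hpA⟩, hdvd⟩ := hp
    have hdvd2 : (d:ℤ) ∣ p - w % d := by
      have : p - w % d = (p - w) + (w - w % d) := by ring
      rw [this]; exact dvd_add hdvd hwr
    obtain ⟨c, hc⟩ := hdvd2
    have hc0 : 0 ≤ c := by
      rcases le_or_gt 0 c with h | h
      · exact h
      · exfalso; nlinarith
    have hq : (p - w % d) / (d:ℤ) = c := by rw [hc, Int.mul_ediv_cancel_left _ hd'.ne']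
    beta_reduce
    rw [hq]
    have h1 : (ζ ^ (d:ℕ)) ^ c.toNat = ζ ^ ((d:ℤ) * c) := by
      rw [← zpow_natCast ζ d, ← zpow_natCast (ζ ^ (d:ℤ)) c.toNat, ← zpow_mul]
      congr 1
      simp [Int.toNat_of_nonneg hc0]
    rw [h1, ← zpow_add₀ hζ]
    congr 1
    omega

lemma line_sum_zero (ζ : ℂ) (hζ : ζ ≠ 0) (d A : ℕ) (hd : 0 < d) (hdA : d ∣ A) (w : ℤ)
    (hζd : ζ ^ d ≠ 1) (hζA : ζ ^ A = 1) :
    ∑ p ∈ (Finset.Ico (0:ℤ) A).filter (fun p => (d:ℤ) ∣ p - w), ζ ^ p = 0 := by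
  rw [coset_sum ζ hζ d A hd hdA w, geom_sum_eq hζd]
  have : (ζ ^ d) ^ (A / d) = 1 := by
    rw [← pow_mul, Nat.mul_div_cancel' hdA, hζA]
  rw [this]
  simp

lemma line_sum_one (ζ : ℂ) (hζ : ζ ≠ 0) (d A : ℕ) (hd : 0 < d) (hdA : d ∣ A) (w : ℤ)
    (hζd : ζ ^ d = 1) :
    ∑ p ∈ (Finset.Ico (0:ℤ) A).filter (fun p => (d:ℤ) ∣ p - w), ζ ^ p
      = (A / d : ℕ) * ζ ^ w := by
  rw [coset_sum ζ hζ d A hd hdA w, hζd]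
  simp only [one_pow, Finset.sum_const, Finset.card_range, nsmul_eq_mul, mul_one]
  have h1 : ζ ^ (w % (d:ℤ)) = ζ ^ w := by
    rw [Int.emod_def, zpow_sub₀ hζ, zpow_mul]
    rw [zpow_natCast, hζd]
    simp
  rw [h1]; ring


/-- The Cartesian coset `v + (aℤ × bℤ)` of `ℤ²`. -/
def cartCoset2 (v : ℤ × ℤ) (a b : ℕ) : Set (ℤ × ℤ) :=
  {p | (a : ℤ) ∣ (p.1 - v.1) ∧ (b : ℤ) ∣ (p.2 - v.2)}

theorem Z2_tiling_has_translates (n : ℕ) (hn : 2 ≤ n)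
    (v : Fin n → ℤ × ℤ) (a b : Fin n → ℕ)
    (ha : ∀ j, 0 < a j) (hb : ∀ j, 0 < b j)
    (hdisj : ∀ j m, j ≠ m → Disjoint (cartCoset2 (v j) (a j) (b j)) (cartCoset2 (v m) (a m) (b m)))
    (hcover : (⋃ j, cartCoset2 (v j) (a j) (b j)) = Set.univ) :
    ∃ j m, j ≠ m ∧ a j = a m ∧ b j = b m := by
  classical
  by_contra hcon
  push_neg at hcon
  -- choose j₀ maximizing a, then b among those
  have hne : (Finset.univ : Finset (Fin n)).Nonempty := ⟨⟨0, by omega⟩, Finset.mem_univ _⟩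
  obtain ⟨j₁, -, hj₁⟩ := Finset.exists_max_image Finset.univ a hne
  obtain ⟨j₀, hj₀T, hj₀⟩ :=
    Finset.exists_max_image (Finset.univ.filter fun j => a j = a j₁) b ⟨j₁, by simp⟩
  simp only [Finset.mem_filter, Finset.mem_univ, true_and] at hj₀T
  have hamax : ∀ j, a j ≤ a j₀ := fun j => hj₀T ▸ hj₁ j (Finset.mem_univ j)
  have hbmax : ∀ j, a j = a j₀ → b j ≤ b j₀ := by
    intro j hj
    exact hj₀ j (by simp [Finset.mem_filter, hj.trans hj₀T])
  set A := ∏ j, a j with hAdef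
  set B := ∏ j, b j with hBdef
  have hA0 : 0 < A := Finset.prod_pos (fun j _ => ha j)
  have hB0 : 0 < B := Finset.prod_pos (fun j _ => hb j)
  have hAdvd : ∀ j, a j ∣ A := fun j => Finset.dvd_prod_of_mem a (Finset.mem_univ j)
  have hBdvd : ∀ j, b j ∣ B := fun j => Finset.dvd_prod_of_mem b (Finset.mem_univ j)
  set ζ₁ : ℂ := Complex.exp (2 * Real.pi * Complex.I / (a j₀)) with hz1
  set ζ₂ : ℂ := Complex.exp (2 * Real.pi * Complex.I / (b j₀)) with hz2
  have hζ₁0 : ζ₁ ≠ 0 := Complex.exp_ne_zero _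
  have hζ₂0 : ζ₂ ≠ 0 := Complex.exp_ne_zero _
  have hζ₁pow : ∀ m, ζ₁ ^ m = 1 ↔ a j₀ ∣ m := exp_pow_eq_one_iff (a j₀) (ha j₀)
  have hζ₂pow : ∀ m, ζ₂ ^ m = 1 ↔ b j₀ ∣ m := exp_pow_eq_one_iff (b j₀) (hb j₀)
  have hζ₁A : ζ₁ ^ A = 1 := (hζ₁pow A).mpr (hAdvd j₀)
  have hζ₂B : ζ₂ ^ B = 1 := (hζ₂pow B).mpr (hBdvd j₀)
  -- tiling function
  have hex : ∀ p : ℤ × ℤ, ∃ j, p ∈ cartCoset2 (v j) (a j) (b j) := by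
    intro p
    have hp : p ∈ (⋃ j, cartCoset2 (v j) (a j) (b j)) := hcover ▸ Set.mem_univ p
    exact Set.mem_iUnion.mp hp
  choose t ht using hex
  have hmem_iff : ∀ p j, p ∈ cartCoset2 (v j) (a j) (b j) ↔ t p = j := by
    intro p j
    constructor
    · intro hp
      by_contra hne'
      exact Set.disjoint_left.mp (hdisj j (t p) (fun h => hne' h.symm)) hp (ht p)
    · rintro rfl; exact ht p
  -- box and character
  set box : Finset (ℤ × ℤ) := Finset.Ico (0:ℤ) A ×ˢ Finset.Ico (0:ℤ) B with hboxdef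
  set χ : ℤ × ℤ → ℂ := fun p => ζ₁ ^ p.1 * ζ₂ ^ p.2 with hχdef
  have hfiber : ∀ j, ∑ p ∈ box.filter (fun p => t p = j), χ p
      = (∑ x ∈ (Finset.Ico (0:ℤ) A).filter (fun x => ((a j : ℕ):ℤ) ∣ x - (v j).1), ζ₁ ^ x)
        * (∑ y ∈ (Finset.Ico (0:ℤ) B).filter (fun y => ((b j : ℕ):ℤ) ∣ y - (v j).2), ζ₂ ^ y) := by
    intro j
    have hfe : box.filter (fun p => t p = j)
        = box.filter (fun p => (((a j : ℕ):ℤ) ∣ p.1 - (v j).1) ∧ (((b j : ℕ):ℤ) ∣ p.2 - (v j).2)) := by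
      apply Finset.filter_congr
      intro p _
      rw [← hmem_iff p j]
      exact Iff.rfl
    rw [hfe, hboxdef,
      Finset.filter_product (fun x => ((a j : ℕ):ℤ) ∣ x - (v j).1)
        (fun y => ((b j : ℕ):ℤ) ∣ y - (v j).2),
      Finset.sum_mul_sum, Finset.sum_product]
  have htotal : ∑ j, ∑ p ∈ box.filter (fun p => t p = j), χ p = ∑ p ∈ box, χ p :=
    Finset.sum_fiberwise box t χ
  have hbox : ∑ p ∈ box, χ p
      = (∑ x ∈ Finset.Ico (0:ℤ) A, ζ₁ ^ x) * (∑ y ∈ Finset.Ico (0:ℤ) B, ζ₂ ^ y) := by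
    rw [hboxdef, Finset.sum_mul_sum, Finset.sum_product]
  have hIcoA : (Finset.Ico (0:ℤ) A).filter (fun x => ((1:ℕ):ℤ) ∣ x - 0) = Finset.Ico (0:ℤ) A :=
    Finset.filter_true_of_mem (fun _ _ => one_dvd _)
  have hIcoB : (Finset.Ico (0:ℤ) B).filter (fun x => ((1:ℕ):ℤ) ∣ x - 0) = Finset.Ico (0:ℤ) B :=
    Finset.filter_true_of_mem (fun _ _ => one_dvd _)
  have hzero : ∑ p ∈ box, χ p = 0 := by
    rcases Nat.lt_or_ge 1 (a j₀) with h1 | h1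
    · have hζ₁ne : ζ₁ ^ (1:ℕ) ≠ 1 := fun h => by
        have := (hζ₁pow 1).mp h
        have := Nat.le_of_dvd one_pos this
        omega
      have hF1 : ∑ x ∈ Finset.Ico (0:ℤ) A, ζ₁ ^ x = 0 := by
        rw [← hIcoA]
        exact line_sum_zero ζ₁ hζ₁0 1 A one_pos (one_dvd A) 0 hζ₁ne hζ₁A
      rw [hbox, hF1, zero_mul]
    · have hb₀ : 1 < b j₀ := by
        by_contra hb1
        push_neg at hb1
        have i0 : Fin n := ⟨0, by omega⟩
        have hij : (⟨0, by omega⟩ : Fin n) ≠ (⟨1, by omega⟩ : Fin n) := by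
          intro h
          exact absurd (congrArg Fin.val h) (by norm_num)
        have haeq : ∀ j, a j = 1 := fun j => by have := hamax j; have := ha j; omega
        have hbeq : ∀ j, b j = 1 := fun j => by
          have := hbmax j (by rw [haeq j, haeq j₀])
          have := hb j
          omega
        exact hcon _ _ hij (by rw [haeq, haeq]) (by rw [hbeq, hbeq])
      have hζ₂ne : ζ₂ ^ (1:ℕ) ≠ 1 := fun h => by
        have := (hζ₂pow 1).mp h
        have := Nat.le_of_dvd one_pos this
        omega
      have hF2 : ∑ y ∈ Finset.Ico (0:ℤ) B, ζ₂ ^ y = 0 := by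
        rw [← hIcoB]
        exact line_sum_zero ζ₂ hζ₂0 1 B one_pos (one_dvd B) 0 hζ₂ne hζ₂B
      rw [hbox, hF2, mul_zero]
  have hS : ∀ j, j ≠ j₀ → ∑ p ∈ box.filter (fun p => t p = j), χ p = 0 := by
    intro j hj
    rcases eq_or_ne (a j) (a j₀) with hae | hane
    · have hbne : b j ≠ b j₀ := hcon j j₀ hj hae
      have hble : b j ≤ b j₀ := hbmax j hae
      have hndvd : ¬ b j₀ ∣ b j := fun hdvd =>
        hbne (Nat.le_antisymm hble (Nat.le_of_dvd (hb j) hdvd))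
      have hζ₂bj : ζ₂ ^ (b j) ≠ 1 := fun h => hndvd ((hζ₂pow (b j)).mp h)
      rw [hfiber j,
        line_sum_zero ζ₂ hζ₂0 (b j) B (hb j) (hBdvd j) ((v j).2) hζ₂bj hζ₂B, mul_zero]
    · have hale : a j ≤ a j₀ := hamax j
      have hndvd : ¬ a j₀ ∣ a j := fun hdvd =>
        hane (Nat.le_antisymm hale (Nat.le_of_dvd (ha j) hdvd))
      have hζ₁aj : ζ₁ ^ (a j) ≠ 1 := fun h => hndvd ((hζ₁pow (a j)).mp h)
      rw [hfiber j,
        line_sum_zero ζ₁ hζ₁0 (a j) A (ha j) (hAdvd j) ((v j).1) hζ₁aj hζ₁A, zero_mul]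
  have hSj₀ : ∑ p ∈ box.filter (fun p => t p = j₀), χ p ≠ 0 := by
    rw [hfiber j₀,
      line_sum_one ζ₁ hζ₁0 (a j₀) A (ha j₀) (hAdvd j₀) ((v j₀).1) ((hζ₁pow (a j₀)).mpr dvd_rfl),
      line_sum_one ζ₂ hζ₂0 (b j₀) B (hb j₀) (hBdvd j₀) ((v j₀).2) ((hζ₂pow (b j₀)).mpr dvd_rfl)]
    have hAa : (A / a j₀ : ℕ) ≠ 0 :=
      Nat.div_ne_zero_iff.mpr ⟨(ha j₀).ne', Nat.le_of_dvd hA0 (hAdvd j₀)⟩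
    have hBb : (B / b j₀ : ℕ) ≠ 0 :=
      Nat.div_ne_zero_iff.mpr ⟨(hb j₀).ne', Nat.le_of_dvd hB0 (hBdvd j₀)⟩
    apply mul_ne_zero <;> apply mul_ne_zero
    · exact_mod_cast hAa
    · exact zpow_ne_zero _ hζ₁0
    · exact_mod_cast hBb
    · exact zpow_ne_zero _ hζ₂0
  apply hSj₀
  have hsingle : ∑ j, ∑ p ∈ box.filter (fun p => t p = j), χ p
      = ∑ p ∈ box.filter (fun p => t p = j₀), χ p :=
    Finset.sum_eq_single j₀ (fun j _ hj => hS j hj)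
      (fun h => absurd (Finset.mem_univ j₀) h)
  rw [← hsingle, htotal, hzero]
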